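/- Let X = X₁ × ⋯ × X_n with |X_i| ≥ 2, let 1 ≤ k ≤ n, let A ∈ ℝ^{a×X} be a matrix whose rows span V_k(X), and let Y be a finite nonempty set. If X contains |Y| pairwise disjoint radius-k Hamming balls, then the maximum over all families of vectors (v_y)_{y∈Y} in ℝ^a of ∑_{y∈Y} rank(A_{C_y}), where (C_y)_{y∈Y} is the induced slicing, equals |Y| · (1 + ∑_{λ∈Λ_k∖{∅}} ∏_{i∈λ}(|X_i|−1)). -/

import Mathlib

open scoped Classical BigOperators

/-- `V_k(X)`: the span of all functions on `X = ∏ i, X_i` depending on at most `k`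
coordinates. -/
noncomputable def Vk (n : ℕ) (q : Fin n → ℕ) (k : ℕ) :
    Submodule ℝ ((∀ i, Fin (q i)) → ℝ) :=
  Submodule.span ℝ
    {f : (∀ i, Fin (q i)) → ℝ | ∃ s : Finset (Fin n), s.card ≤ k ∧
      ∀ x x' : ∀ i, Fin (q i), (∀ i ∈ s, x i = x' i) → f x = f x'}

/-- The rank of the submatrix `A_C` of columns of `A` indexed by `C` (the dimension of
the span of those columns). -/
noncomputable def colRank {m X : Type*} [Fintype m] (A : Matrix m X ℝ) (C : Set X) : ℕ :=
  Module.finrank ℝ (Submodule.span ℝ ((fun x => fun i => A i x) '' C))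

/-- The slicing induced by a family of vectors `(v_y)`:
`C_y = {x : ⟨A_x, v_y⟩ > ⟨A_x, v_{y'}⟩ for all y' ≠ y}`. -/
def sliceSet {a : ℕ} {X Y : Type*} [Fintype (Fin a)] (A : Matrix (Fin a) X ℝ)
    (v : Y → Fin a → ℝ) (y : Y) : Set X :=
  {x | ∀ y', y' ≠ y → ∑ i, A i x * v y' i < ∑ i, A i x * v y i}

namespace Stmt7

variable {n : ℕ} {q : Fin n → ℕ}

/-- Indicator product function. -/
noncomputable def eFun (t : Finset (Fin n)) (b : ∀ i, Fin (q i)) :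
    (∀ i, Fin (q i)) → ℝ :=
  fun x => ∏ i ∈ t, if x i = b i then 1 else 0

/-- Index type for the adapted basis of `V_k` relative to center `c`. -/
def Idx (q : Fin n → ℕ) (k : ℕ) (c : ∀ i, Fin (q i)) : Type _ :=
  Σ t : {t : Finset (Fin n) // t.card ≤ k},
    ∀ i : {i // i ∈ t.1}, {v : Fin (q i.1) // v ≠ c i.1}

noncomputable instance (k : ℕ) (c : ∀ i, Fin (q i)) : Fintype (Idx q k c) := by
  unfold Idx; infer_instance

/-- The full assignment corresponding to an index. -/
noncomputable def bOf {k : ℕ} {c : ∀ i, Fin (q i)} (p : Idx q k c) : ∀ i, Fin (q i) :=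
  fun i => if h : i ∈ p.1.1 then (p.2 ⟨i, h⟩).1 else c i

noncomputable def E {k : ℕ} (c : ∀ i, Fin (q i)) (p : Idx q k c) :
    (∀ i, Fin (q i)) → ℝ :=
  eFun p.1.1 (bOf p)

lemma bOf_mem {k : ℕ} {c : ∀ i, Fin (q i)} (p : Idx q k c) {i : Fin n} (h : i ∈ p.1.1) :
    bOf p i = (p.2 ⟨i, h⟩).1 := dif_pos h

lemma bOf_not_mem {k : ℕ} {c : ∀ i, Fin (q i)} (p : Idx q k c) {i : Fin n}
    (h : i ∉ p.1.1) : bOf p i = c i := dif_neg h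

lemma card_Idx (k : ℕ) (c : ∀ i, Fin (q i)) :
    Fintype.card (Idx q k c) =
      1 + ∑ t ∈ Finset.univ.filter
            (fun t : Finset (Fin n) => t.Nonempty ∧ t.card ≤ k),
          ∏ i ∈ t, (q i - 1) := by
  rw [show (Fintype.card (Idx q k c)) = Fintype.card
    (Σ t : {t : Finset (Fin n) // t.card ≤ k},
      ∀ i : {i // i ∈ t.1}, {v : Fin (q i.1) // v ≠ c i.1}) from rfl]
  rw [Fintype.card_sigma]
  have h1 : ∀ t : {t : Finset (Fin n) // t.card ≤ k},
      Fintype.card (∀ i : {i // i ∈ t.1}, {v : Fin (q i.1) // v ≠ c i.1}) =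
      ∏ i ∈ t.1, (q i - 1) := by
    intro t
    rw [Fintype.card_pi]
    rw [← Finset.prod_coe_sort t.1 (fun i => q i - 1)]
    apply Finset.prod_congr rfl
    intro i _
    have : Fintype.card {v : Fin (q i.1) // v ≠ c i.1} = q i.1 - 1 := by
      simp [Fintype.card_subtype_compl, Fintype.card_subtype_eq]
    exact this
  simp_rw [h1]
  have h2 : ∑ t : {t : Finset (Fin n) // t.card ≤ k}, ∏ i ∈ t.1, (q i - 1)
      = ∑ t ∈ Finset.univ.filter (fun t : Finset (Fin n) => t.card ≤ k),
          ∏ i ∈ t, (q i - 1) := by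
    exact (Finset.sum_subtype (p := fun t : Finset (Fin n) => t.card ≤ k)
      (Finset.univ.filter (fun t : Finset (Fin n) => t.card ≤ k))
      (fun x => by simp) (fun t => ∏ i ∈ t, (q i - 1))).symm
  rw [h2]
  have h3 : Finset.univ.filter (fun t : Finset (Fin n) => t.card ≤ k) =
      insert ∅ (Finset.univ.filter
        (fun t : Finset (Fin n) => t.Nonempty ∧ t.card ≤ k)) := by
    ext t
    simp only [Finset.mem_filter, Finset.mem_univ, true_and, Finset.mem_insert]
    rcases t.eq_empty_or_nonempty with h | h
    · simp [h]
    · simp [h, Finset.nonempty_iff_ne_empty.mp h]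
  rw [h3, Finset.sum_insert (by simp)]
  simp

lemma hammingDist_bOf {k : ℕ} {c : ∀ i, Fin (q i)} (p : Idx q k c) :
    hammingDist (bOf p) c = p.1.1.card := by
  unfold hammingDist
  congr 1
  ext i
  simp only [Finset.mem_filter, Finset.mem_univ, true_and]
  constructor
  · intro hne
    by_contra h
    exact hne (bOf_not_mem p h)
  · intro h
    rw [bOf_mem p h]
    exact (p.2 ⟨i, h⟩).2

lemma eFun_eval_bOf {k : ℕ} {c : ∀ i, Fin (q i)} (t : Finset (Fin n))
    (b : ∀ i, Fin (q i)) (p : Idx q k c)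
    (h : ∀ i ∈ t, i ∈ p.1.1 ∧ bOf p i = b i) : eFun t b (bOf p) = 1 := by
  unfold eFun
  apply Finset.prod_eq_one
  intro i hi
  rw [if_pos (h i hi).2]

lemma E_eval_self {k : ℕ} {c : ∀ i, Fin (q i)} (p : Idx q k c) : E c p (bOf p) = 1 := by
  apply eFun_eval_bOf
  intro i hi
  exact ⟨hi, rfl⟩

lemma E_eval {k : ℕ} {c : ∀ i, Fin (q i)} (p p' : Idx q k c) (hne : p' ≠ p)
    (hsub : ¬ (p'.1.1 ⊂ p.1.1)) : E c p' (bOf p) = 0 := by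
  by_cases hz : ∀ i ∈ p'.1.1, bOf p i = bOf p' i
  · exfalso
    have hsubset : p'.1.1 ⊆ p.1.1 := by
      intro i hi
      by_contra hmem
      have h1 := bOf_not_mem p hmem
      have h2 := bOf_mem p' hi
      have := hz i hi
      rw [h1, h2] at this
      exact (p'.2 ⟨i, hi⟩).2 this.symm
    have heq : p'.1.1 = p.1.1 := by
      by_contra h2
      exact hsub (Finset.ssubset_iff_subset_ne.mpr ⟨hsubset, h2⟩)
    apply hne
    rcases p with ⟨⟨t, ht⟩, b⟩
    rcases p' with ⟨⟨t', ht'⟩, b'⟩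
    simp only at heq
    subst heq
    congr 1
    funext i
    apply Subtype.ext
    have h2 := bOf_mem (⟨⟨t', ht'⟩, b'⟩ : Idx q k c) i.2
    have h1 := bOf_mem (⟨⟨t', ht⟩, b⟩ : Idx q k c) i.2
    have := hz i.1 i.2
    rw [h1, h2] at this
    simpa using this.symm
  · push_neg at hz
    obtain ⟨i, hi, hne'⟩ := hz
    unfold E eFun
    apply Finset.prod_eq_zero hi
    rw [if_neg]
    rw [bOf_mem p' hi] at hne' ⊢
    exact hne'

lemma indep_on_ball {k : ℕ} (c : ∀ i, Fin (q i)) (C : Set (∀ i, Fin (q i)))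
    (hC : ∀ x, hammingDist x c ≤ k → x ∈ C) :
    LinearIndependent ℝ (fun p : Idx q k c => (fun x : C => E c p x.1)) := by
  rw [Fintype.linearIndependent_iff]
  intro g hg
  have hpt : ∀ x ∈ C, ∑ p : Idx q k c, g p * E c p x = 0 := by
    intro x hx
    have := congrFun hg ⟨x, hx⟩
    simpa [Finset.sum_apply] using this
  suffices key : ∀ (m : ℕ) (p : Idx q k c), p.1.1.card = m → g p = 0 by
    intro p; exact key _ p rfl
  intro m
  induction m using Nat.strong_induction_on with
  | _ m IH =>
    intro p hm
    have hball : bOf p ∈ C := hC _ (by rw [hammingDist_bOf]; exact p.1.2)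
    have h0 := hpt (bOf p) hball
    rw [Finset.sum_eq_single p] at h0
    · rw [E_eval_self, mul_one] at h0; exact h0
    · intro p' _ hne
      by_cases hss : p'.1.1 ⊂ p.1.1
      · have : g p' = 0 := by
          apply IH p'.1.1.card _ p' rfl
          rw [← hm]
          exact Finset.card_lt_card hss
        rw [this, zero_mul]
      · rw [E_eval p p' hne hss, mul_zero]
    · intro h; exact absurd (Finset.mem_univ p) h

lemma eFun_congr {t : Finset (Fin n)} {b b' : ∀ i, Fin (q i)}
    (h : ∀ i ∈ t, b i = b' i) : eFun t b = eFun t b' := by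
  funext x
  exact Finset.prod_congr rfl fun i hi => by rw [h i hi]

lemma eFun_mem_span {k : ℕ} (c : ∀ i, Fin (q i)) :
    ∀ (m : ℕ) (t : Finset (Fin n)) (b : ∀ i, Fin (q i)), t.card ≤ k →
      (t.filter (fun i => b i = c i)).card ≤ m →
      eFun t b ∈ Submodule.span ℝ (Set.range (E (q := q) (k := k) c)) := by
  intro m
  induction m with
  | zero =>
    intro t b ht hbad
    have hb : ∀ i ∈ t, b i ≠ c i := by
      intro i hi hbc
      have : i ∈ t.filter (fun i => b i = c i) := Finset.mem_filter.mpr ⟨hi, hbc⟩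
      have := Finset.card_pos.mpr ⟨i, this⟩
      omega
    apply Submodule.subset_span
    refine ⟨⟨⟨t, ht⟩, fun i => ⟨b i.1, hb i.1 i.2⟩⟩, ?_⟩
    apply eFun_congr
    intro i hi
    exact (bOf_mem (⟨⟨t, ht⟩, fun i => ⟨b i.1, hb i.1 i.2⟩⟩ : Idx q k c) hi)
  | succ m IH =>
    intro t b ht hbad
    by_cases hm : (t.filter (fun i => b i = c i)).card ≤ m
    · exact IH t b ht hm
    · have hpos : 0 < (t.filter (fun i => b i = c i)).card := by omega
      obtain ⟨i₀, hi₀⟩ := Finset.card_pos.mp hpos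
      rw [Finset.mem_filter] at hi₀
      obtain ⟨hi₀t, hi₀c⟩ := hi₀
      have hpart : eFun (t.erase i₀) b =
          ∑ v : Fin (q i₀), eFun t (Function.update b i₀ v) := by
        funext x
        have h1 : ∀ v : Fin (q i₀), eFun t (Function.update b i₀ v) x =
            eFun (t.erase i₀) b x * (if x i₀ = v then 1 else 0) := by
          intro v
          unfold eFun
          rw [← Finset.prod_erase_mul t _ hi₀t]
          congr 1
          · apply Finset.prod_congr rfl
            intro i hi
            rw [Function.update_of_ne (Finset.ne_of_mem_erase hi)]
          · rw [Function.update_self]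
        simp only [Finset.sum_apply]
        simp_rw [h1]
        rw [← Finset.mul_sum]
        have : ∑ v : Fin (q i₀), (if x i₀ = v then (1:ℝ) else 0) = 1 := by
          simp [Finset.sum_ite_eq]
        rw [this, mul_one]
      have hkey : eFun t b = eFun (t.erase i₀) b -
          ∑ v ∈ Finset.univ.erase (c i₀), eFun t (Function.update b i₀ v) := by
        rw [hpart]
        rw [← Finset.add_sum_erase Finset.univ _ (Finset.mem_univ (c i₀))]
        have : Function.update b i₀ (c i₀) = b := by
          rw [← hi₀c]; exact Function.update_eq_self i₀ b
        rw [this]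
        ring
      rw [hkey]
      apply Submodule.sub_mem
      · apply IH _ _ (le_trans (Finset.card_le_card (Finset.erase_subset i₀ t)) ht)
        have hsub : (t.erase i₀).filter (fun i => b i = c i) ⊆
            (t.filter (fun i => b i = c i)).erase i₀ := by
          intro i hi
          rw [Finset.mem_filter, Finset.mem_erase] at hi
          rw [Finset.mem_erase, Finset.mem_filter]
          exact ⟨hi.1.1, hi.1.2, hi.2⟩
        calc ((t.erase i₀).filter (fun i => b i = c i)).card
            ≤ ((t.filter (fun i => b i = c i)).erase i₀).card :=
              Finset.card_le_card hsub
          _ = (t.filter (fun i => b i = c i)).card - 1 :=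
              Finset.card_erase_of_mem (Finset.mem_filter.mpr ⟨hi₀t, hi₀c⟩)
          _ ≤ m := by omega
      · apply Submodule.sum_mem
        intro v hv
        rw [Finset.mem_erase] at hv
        apply IH _ _ ht
        have hsub : t.filter (fun i => Function.update b i₀ v i = c i) ⊆
            (t.filter (fun i => b i = c i)).erase i₀ := by
          intro i hi
          rw [Finset.mem_filter] at hi
          have hii : i ≠ i₀ := by
            intro h
            subst h
            rw [Function.update_self] at hi
            exact hv.1 hi.2
          rw [Finset.mem_erase, Finset.mem_filter]
          rw [Function.update_of_ne hii] at hi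
          exact ⟨hii, hi⟩
        calc (t.filter (fun i => Function.update b i₀ v i = c i)).card
            ≤ ((t.filter (fun i => b i = c i)).erase i₀).card :=
              Finset.card_le_card hsub
          _ = (t.filter (fun i => b i = c i)).card - 1 :=
              Finset.card_erase_of_mem (Finset.mem_filter.mpr ⟨hi₀t, hi₀c⟩)
          _ ≤ m := by omega

lemma eFun_mem {k : ℕ} (t : Finset (Fin n)) (b : ∀ i, Fin (q i)) (ht : t.card ≤ k) :
    eFun t b ∈ Vk n q k := by
  apply Submodule.subset_span
  exact ⟨t, ht, fun x x' h => Finset.prod_congr rfl fun i hi => by rw [h i hi]⟩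

lemma E_mem {k : ℕ} (c : ∀ i, Fin (q i)) (p : Idx q k c) : E c p ∈ Vk n q k :=
  eFun_mem _ _ p.1.2

lemma vk_le_span {k : ℕ} (c : ∀ i, Fin (q i)) :
    Vk n q k ≤ Submodule.span ℝ (Set.range (E (q := q) (k := k) c)) := by
  rw [Vk, Submodule.span_le]
  rintro f ⟨s, hs, hf⟩
  set ext : (∀ i : {i // i ∈ s}, Fin (q i.1)) → (∀ i, Fin (q i)) :=
    fun b i => if h : i ∈ s then b ⟨i, h⟩ else c i with hext
  have hdecomp : f = ∑ b : (∀ i : {i // i ∈ s}, Fin (q i.1)),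
      f (ext b) • eFun s (ext b) := by
    funext x
    simp only [Finset.sum_apply, Pi.smul_apply, smul_eq_mul]
    rw [Finset.sum_eq_single (fun i : {i // i ∈ s} => x i.1)]
    · have h1 : eFun s (ext (fun i : {i // i ∈ s} => x i.1)) x = 1 := by
        apply Finset.prod_eq_one
        intro i hi
        rw [if_pos]
        simp [hext, hi]
      rw [h1, mul_one]
      apply hf
      intro i hi
      simp [hext, hi]
    · intro b _ hbne
      have : ∃ i : {i // i ∈ s}, b i ≠ x i.1 := by
        by_contra h
        push_neg at h
        exact hbne (funext h)
      obtain ⟨i, hi⟩ := this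
      have h0 : eFun s (ext b) x = 0 := by
        apply Finset.prod_eq_zero i.2
        rw [if_neg]
        simp only [hext, i.2, dif_pos]
        intro h
        exact hi (by simpa using h.symm)
      rw [h0, mul_zero]
    · intro h
      exact absurd (Finset.mem_univ _) h
  rw [hdecomp]
  apply Submodule.sum_mem
  intro b _
  apply Submodule.smul_mem
  exact eFun_mem_span c _ s (ext b) hs le_rfl

lemma colRank_eq_finrank_map {a : ℕ} {X : Type*} [Fintype X]
    (A : Matrix (Fin a) X ℝ) (C : Set X) :
    colRank A C = Module.finrank ℝ ((Submodule.span ℝ (Set.range A)).map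
      (LinearMap.funLeft ℝ ℝ (Subtype.val : C → X))) := by
  haveI : Fintype C := C.toFinite.fintype
  let B : Matrix (Fin a) C ℝ := fun i x => A i x.1
  have hset : (fun x => fun i => A i x) '' C = Set.range B.transpose := by
    rw [Set.image_eq_range]
    rfl
  have h1 : colRank A C = B.rank := by
    unfold colRank
    rw [hset]; exact (Matrix.rank_eq_finrank_span_cols B).symm
  have hset2 : Set.range B =
      (LinearMap.funLeft ℝ ℝ (Subtype.val : C → X)) '' Set.range A := by
    exact (Set.range_comp (LinearMap.funLeft ℝ ℝ (Subtype.val : C → X)) A)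
  rw [h1, Matrix.rank_eq_finrank_span_row B, show Set.range B.row = _ from hset2, ← Submodule.map_span]

end Stmt7

open Stmt7 in
theorem tropical_mixture_k_interaction_disjoint_balls
    (n : ℕ) (q : Fin n → ℕ) (hq : ∀ i, 2 ≤ q i)
    (k : ℕ) (hk1 : 1 ≤ k) (hkn : k ≤ n)
    (a : ℕ) (A : Matrix (Fin a) (∀ i, Fin (q i)) ℝ)
    (hA : Submodule.span ℝ (Set.range A) = Vk n q k)
    {Y : Type*} [Fintype Y] [Nonempty Y]
    (c : Y → ∀ i, Fin (q i))
    (hdisj : ∀ y y', y ≠ y' →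
      ∀ x, ¬(hammingDist x (c y) ≤ k ∧ hammingDist x (c y') ≤ k)) :
    IsGreatest {s : ℕ | ∃ v : Y → Fin a → ℝ, s = ∑ y : Y, colRank A (sliceSet A v y)}
      (Fintype.card Y *
        (1 + ∑ t ∈ Finset.univ.filter
            (fun t : Finset (Fin n) => t.Nonempty ∧ t.card ≤ k),
          ∏ i ∈ t, (q i - 1))) := by
  set D : ℕ := 1 + ∑ t ∈ Finset.univ.filter
      (fun t : Finset (Fin n) => t.Nonempty ∧ t.card ≤ k),
    ∏ i ∈ t, (q i - 1) with hD
  have hcard : ∀ c₀ : ∀ i, Fin (q i), Fintype.card (Idx q k c₀) = D := by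
    intro c₀; rw [hD]; exact card_Idx k c₀
  have hVkle : ∀ c₀ : ∀ i, Fin (q i), Module.finrank ℝ (Vk n q k) ≤ D := by
    intro c₀
    rw [← hcard c₀]
    have h1 := Submodule.finrank_mono (vk_le_span (k := k) c₀)
    refine h1.trans ?_
    refine (finrank_span_le_card (Set.range (E (q := q) (k := k) c₀))).trans ?_
    rw [Set.toFinset_range]
    exact (Finset.card_image_le).trans (by simp)
  have hc₀ : ∀ i : Fin n, (0 : ℕ) < q i := fun i => lt_of_lt_of_le (by norm_num) (hq i)
  have hVkle' : Module.finrank ℝ (Vk n q k) ≤ D := hVkle (fun i => ⟨0, hc₀ i⟩)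
  have hcol_le : ∀ C : Set (∀ i, Fin (q i)), colRank A C ≤ D := by
    intro C
    rw [colRank_eq_finrank_map, hA]
    exact (Submodule.finrank_map_le _ _).trans hVkle'
  have hcol_ge : ∀ (c₀ : ∀ i, Fin (q i)) (C : Set (∀ i, Fin (q i))),
      (∀ x, hammingDist x c₀ ≤ k → x ∈ C) → D ≤ colRank A C := by
    intro c₀ C hC
    haveI : Fintype C := C.toFinite.fintype
    rw [colRank_eq_finrank_map, hA]
    have hindep := indep_on_ball (k := k) c₀ C hC
    have hrank := finrank_span_eq_card hindep
    rw [← hcard c₀, ← hrank]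
    apply Submodule.finrank_mono
    rw [Submodule.span_le]
    rintro _ ⟨p, rfl⟩
    exact Submodule.mem_map_of_mem (E_mem c₀ p)
  have hf : ∀ y : Y, ∃ w : Fin a → ℝ,
      ∑ i, w i • A i = ∑ j : Fin n, (fun x => if x j = c y j then (1:ℝ) else 0) := by
    intro y
    apply (Submodule.mem_span_range_iff_exists_fun ℝ).mp
    rw [hA]
    apply Submodule.sum_mem
    intro j _
    apply Submodule.subset_span
    refine ⟨{j}, by simpa using hk1, ?_⟩
    intro x x' h
    have := h j (Finset.mem_singleton_self j)
    simp only [this]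
  choose w hw using hf
  have hip : ∀ (y : Y) (x : ∀ i, Fin (q i)),
      ∑ i, A i x * w y i = (n : ℝ) - hammingDist x (c y) := by
    intro y x
    have h1 := congrFun (hw y) x
    simp only [Finset.sum_apply, Pi.smul_apply, smul_eq_mul] at h1
    have h2 : ∑ i, A i x * w y i = ∑ i, w y i * A i x := by
      apply Finset.sum_congr rfl; intro i _; ring
    rw [h2, h1]
    have h3 : (∑ j : Fin n, if x j = c y j then (1:ℝ) else 0) =
        ((Finset.univ.filter (fun j => x j = c y j)).card : ℝ) :=
      Finset.sum_boole _ _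
    have h4 : (Finset.univ.filter (fun j => x j = c y j)).card
        + hammingDist x (c y) = n := by
      have h5 : hammingDist x (c y) =
          (Finset.univ.filter (fun j => ¬ x j = c y j)).card := by
        simp [hammingDist]
      rw [h5]
      rw [Finset.card_filter_add_card_filter_not]
      simp
    rw [h3]
    have h6 : ((Finset.univ.filter (fun j => x j = c y j)).card : ℝ)
        + (hammingDist x (c y) : ℝ) = (n : ℝ) := by exact_mod_cast h4
    linarith
  constructor
  · refine ⟨w, ?_⟩
    have hslice : ∀ y : Y, colRank A (sliceSet A w y) = D := by
      intro y
      refine le_antisymm (hcol_le _) (hcol_ge (c y) _ ?_)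
      intro x hx
      intro y' hy'
      have hfar : k < hammingDist x (c y') := by
        by_contra h
        push_neg at h
        exact hdisj y y' (Ne.symm hy') x ⟨hx, h⟩
      rw [hip y x, hip y' x]
      have hlt : hammingDist x (c y) < hammingDist x (c y') := lt_of_le_of_lt hx hfar
      have : (hammingDist x (c y) : ℝ) < (hammingDist x (c y') : ℝ) := by
        exact_mod_cast hlt
      linarith
    simp only [hslice]
    rw [Finset.sum_const, Finset.card_univ, smul_eq_mul]
  · rintro s ⟨v, rfl⟩
    calc ∑ y : Y, colRank A (sliceSet A v y) ≤ ∑ _y : Y, D :=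
          Finset.sum_le_sum fun y _ => hcol_le _
      _ = Fintype.card Y * D := by
          rw [Finset.sum_const, Finset.card_univ, smul_eq_mul]
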